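/- The quadratic form ξ ↦ ξ·D_t ξ is positive definite (i.e. ξ·D_t ξ > 0 for every ξ ≠ 0) for all t > 0 if and only if the Hörmander condition V_{2n−1} = ℝ^{2n} holds. -/

import Mathlib

open Matrix MeasureTheory intervalIntegral

section AuxHoermander

variable {ι : Type*} [Fintype ι] [DecidableEq ι]

attribute [local instance] Matrix.linftyOpNormedRing Matrix.linftyOpNormedAlgebra

/-- The linear functional `B ↦ ξ ⬝ᵥ B *ᵥ x` on matrices. -/
noncomputable def dotMulVecLin (ξ x : ι → ℝ) : Matrix ι ι ℝ →ₗ[ℝ] ℝ where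
  toFun B := ξ ⬝ᵥ B.mulVec x
  map_add' B C := by simp [Matrix.add_mulVec, dotProduct_add]
  map_smul' c B := by simp [Matrix.smul_mulVec]

/-- The linear functional `x ↦ ξ ⬝ᵥ B *ᵥ x`. -/
noncomputable def dotMulVecArg (ξ : ι → ℝ) (B : Matrix ι ι ℝ) : (ι → ℝ) →ₗ[ℝ] ℝ where
  toFun x := ξ ⬝ᵥ B.mulVec x
  map_add' x y := by simp [Matrix.mulVec_add, dotProduct_add]
  map_smul' c x := by simp [Matrix.mulVec_smul]

lemma auxDeriv (A : Matrix ι ι ℝ) (ξ x : ι → ℝ) (s : ℝ) :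
    HasDerivAt (fun u : ℝ => ξ ⬝ᵥ (NormedSpace.exp (u • A)).mulVec x)
      (ξ ⬝ᵥ (NormedSpace.exp (s • A)).mulVec (A.mulVec x)) s := by
  have h1 : HasDerivAt (fun u : ℝ => NormedSpace.exp (u • A))
      (NormedSpace.exp (s • A) * A) s := hasDerivAt_exp_smul_const A s
  have h2 := ((dotMulVecLin ξ x).toContinuousLinearMap.hasFDerivAt).comp_hasDerivAt s h1
  have h3 : (dotMulVecLin ξ x).toContinuousLinearMap (NormedSpace.exp (s • A) * A)
      = ξ ⬝ᵥ (NormedSpace.exp (s • A)).mulVec (A.mulVec x) := by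
    simp [dotMulVecLin, ← Matrix.mulVec_mulVec]
  replace h2 := h2.congr_deriv h3
  exact h2

lemma auxCont (A : Matrix ι ι ℝ) (ξ x : ι → ℝ) :
    Continuous (fun u : ℝ => ξ ⬝ᵥ (NormedSpace.exp (u • A)).mulVec x) :=
  continuous_iff_continuousAt.2 fun s => (auxDeriv A ξ x s).continuousAt

lemma auxExpCont (A : Matrix ι ι ℝ) :
    Continuous (fun u : ℝ => NormedSpace.exp (u • A)) :=
  NormedSpace.exp_continuous.comp (continuous_id.smul continuous_const)

lemma auxExpZero (A : Matrix ι ι ℝ) (ξ x : ι → ℝ)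
    (h : ∀ m : ℕ, ξ ⬝ᵥ (A ^ m).mulVec x = 0) (s : ℝ) :
    ξ ⬝ᵥ (NormedSpace.exp (s • A)).mulVec x = 0 := by
  have hsum : Summable fun m : ℕ => ((m.factorial : ℝ))⁻¹ • (s • A) ^ m :=
    NormedSpace.expSeries_summable' (𝕂 := ℝ) (s • A)
  have hmap := (dotMulVecLin ξ x).toContinuousLinearMap.map_tsum hsum
  have hexp : NormedSpace.exp (s • A) = ∑' m : ℕ, ((m.factorial : ℝ))⁻¹ • (s • A) ^ m :=
    congrFun (NormedSpace.exp_eq_tsum ℝ) _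
  calc ξ ⬝ᵥ (NormedSpace.exp (s • A)).mulVec x
      = (dotMulVecLin ξ x).toContinuousLinearMap (NormedSpace.exp (s • A)) := rfl
    _ = ∑' m : ℕ, (dotMulVecLin ξ x).toContinuousLinearMap
          (((m.factorial : ℝ))⁻¹ • (s • A) ^ m) := by rw [hexp, hmap]
    _ = 0 := by
        rw [← tsum_zero]
        congr 1
        funext m
        have hp : ((s • A : Matrix ι ι ℝ)) ^ m = s ^ m • A ^ m := smul_pow s A m
        simp [hp, dotMulVecLin, Matrix.smul_mulVec, h m]

lemma auxExpZeroSmul (A : Matrix ι ι ℝ) : NormedSpace.exp ((0:ℝ) • A) = 1 := by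
  rw [zero_smul, NormedSpace.exp_zero]

lemma auxIntZero {f : ℝ → ℝ} (hc : Continuous f) {t : ℝ} (ht : 0 < t)
    (hnn : ∀ s, 0 ≤ f s) (hint : (∫ s in (0:ℝ)..t, f s) ≤ 0) :
    ∀ s ∈ Set.Icc (0:ℝ) t, f s = 0 := by
  intro s₀ hs₀
  by_contra h
  have hpos : 0 < f s₀ := (hnn s₀).lt_of_ne (Ne.symm h)
  have hfi : IntervalIntegrable f volume 0 t := hc.intervalIntegrable 0 t
  have : 0 < ∫ s in (0:ℝ)..t, f s := by
    rw [intervalIntegral.integral_pos_iff_support_of_nonneg_ae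
      (Filter.Eventually.of_forall hnn) hfi]
    refine ⟨ht, ?_⟩
    have hopen : IsOpen (Function.support f) :=
      isOpen_compl_singleton.preimage hc
    obtain ⟨ε, hε, hball⟩ := Metric.isOpen_iff.1 hopen s₀ (by simpa [Function.mem_support] using h)
    set a := max 0 (s₀ - ε) with ha
    set b := min t (s₀ + ε) with hb
    have hab : a < b := by
      rcases hs₀ with ⟨h1, h2⟩
      simp only [ha, hb, lt_min_iff, max_lt_iff]
      exact ⟨⟨ht, by linarith⟩, ⟨by linarith, by linarith⟩⟩
    have hsub : Set.Ioo a b ⊆ Function.support f ∩ Set.Ioc 0 t := by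
      intro x hx
      rcases hx with ⟨hxa, hxb⟩
      have h0x : 0 ≤ a := le_max_left _ _
      constructor
      · apply hball
        rw [Metric.mem_ball, Real.dist_eq, abs_sub_lt_iff]
        constructor
        · have : x < s₀ + ε := lt_of_lt_of_le hxb (min_le_right _ _)
          linarith
        · have : s₀ - ε < x := lt_of_le_of_lt (le_max_right 0 _) hxa
          linarith
      · exact ⟨lt_of_le_of_lt h0x hxa, le_trans hxb.le (min_le_left _ _)⟩
    calc (0:ENNReal) < volume (Set.Ioo a b) := by
          rw [Real.volume_Ioo]; simp [hab]
      _ ≤ volume (Function.support f ∩ Set.Ioc 0 t) := measure_mono hsub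
  linarith

lemma auxVecMulVec (v w η : ι → ℝ) : (vecMulVec v w).mulVec η = (w ⬝ᵥ η) • v := by
  ext i
  simp only [Matrix.mulVec, vecMulVec_apply, dotProduct, Pi.smul_apply, smul_eq_mul,
    Finset.sum_mul, Finset.mul_sum]
  apply Finset.sum_congr rfl; intro j _; ring

lemma auxQuad (B : Matrix ι ι ℝ) (ξ v w : ι → ℝ) :
    ξ ⬝ᵥ ((B * (vecMulVec v w) * Bᵀ).mulVec ξ) = (ξ ⬝ᵥ B.mulVec v) * (ξ ⬝ᵥ B.mulVec w) := by
  have h1 : (B * (vecMulVec v w) * Bᵀ).mulVec ξ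
      = B.mulVec ((vecMulVec v w).mulVec (Bᵀ.mulVec ξ)) := by
    rw [Matrix.mulVec_mulVec, Matrix.mulVec_mulVec]
  rw [h1, auxVecMulVec, Matrix.mulVec_smul, dotProduct_smul, Matrix.mulVec_transpose]
  have h3 : w ⬝ᵥ (ξ ᵥ* B) = ξ ⬝ᵥ B.mulVec w := by
    rw [Matrix.dotProduct_mulVec, dotProduct_comm]
  rw [h3, smul_eq_mul]; ring

lemma auxSumMulVec {κ : Type*} (s : Finset κ) (N : κ → Matrix ι ι ℝ) (y : ι → ℝ) :
    (∑ k ∈ s, N k).mulVec y = ∑ k ∈ s, (N k).mulVec y := by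
  induction s using Finset.cons_induction with
  | empty => simp
  | cons a s ha ih => rw [Finset.sum_cons, Finset.sum_cons, Matrix.add_mulVec, ih]

lemma auxDotSum {κ : Type*} (s : Finset κ) (ξ : ι → ℝ) (y : κ → ι → ℝ) :
    ξ ⬝ᵥ (∑ k ∈ s, y k) = ∑ k ∈ s, ξ ⬝ᵥ y k := by
  simp only [dotProduct, Finset.sum_apply, Finset.mul_sum]
  exact Finset.sum_comm

end AuxHoermander
set_option maxHeartbeats 1000000 in
theorem positive_definite_iff_hoermander (n K : ℕ) (hn : 1 ≤ n)
    (Ω : Matrix (Fin n ⊕ Fin n) (Fin n ⊕ Fin n) ℝ)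
    (hΩ : Ω = Matrix.fromBlocks 0 (-1) 1 0)
    (Q : Matrix (Fin n ⊕ Fin n) (Fin n ⊕ Fin n) ℝ) (hQ : Q.IsSymm)
    (F : Matrix (Fin n ⊕ Fin n) (Fin n ⊕ Fin n) ℝ) (hF : F = Ω * Q)
    (l : Fin K → (Fin n ⊕ Fin n) → ℂ)
    (M : Matrix (Fin n ⊕ Fin n) (Fin n ⊕ Fin n) ℝ)
    (hM : M = ∑ k, (vecMulVec (fun i => (l k i).re) (fun i => (l k i).re)
                  + vecMulVec (fun i => (l k i).im) (fun i => (l k i).im)))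
    (N : Matrix (Fin n ⊕ Fin n) (Fin n ⊕ Fin n) ℝ)
    (hN : N = ∑ k, (vecMulVec (fun i => (l k i).re) (fun i => (l k i).im)
                  - vecMulVec (fun i => (l k i).im) (fun i => (l k i).re)))
    (A : Matrix (Fin n ⊕ Fin n) (Fin n ⊕ Fin n) ℝ) (hA : A = F + N * Ω)
    (V₀ : Submodule ℝ ((Fin n ⊕ Fin n) → ℝ))
    (hV₀ : V₀ = Submodule.span ℝ
      (Set.range (fun k => fun i => (l k i).re) ∪ Set.range (fun k => fun i => (l k i).im)))
    (V : ℕ → Submodule ℝ ((Fin n ⊕ Fin n) → ℝ))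
    (hV : ∀ j : ℕ, V j = ⨆ m ∈ Finset.range (j + 1), Submodule.map (F ^ m).mulVecLin V₀)
    (R : ℝ → Matrix (Fin n ⊕ Fin n) (Fin n ⊕ Fin n) ℝ)
    (hR : ∀ t, R t = NormedSpace.exp (t • A))
    (D : ℝ → Matrix (Fin n ⊕ Fin n) (Fin n ⊕ Fin n) ℝ)
    (hD : ∀ t, D t = Matrix.of fun i j => ∫ s in (0:ℝ)..t, (R s * M * (R s)ᵀ) i j)
    :
    (∀ t : ℝ, 0 < t → ∀ ξ : (Fin n ⊕ Fin n) → ℝ, ξ ≠ 0 → 0 < ξ ⬝ᵥ (D t).mulVec ξ) ↔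
      V (2 * n - 1) = ⊤ := by
  classical
  set vk : Fin K → (Fin n ⊕ Fin n) → ℝ := fun k i => (l k i).re with hvk
  set wk : Fin K → (Fin n ⊕ Fin n) → ℝ := fun k i => (l k i).im with hwk
  have hvV₀ : ∀ k, vk k ∈ V₀ := by
    intro k; rw [hV₀]; exact Submodule.subset_span (Or.inl ⟨k, rfl⟩)
  have hwV₀ : ∀ k, wk k ∈ V₀ := by
    intro k; rw [hV₀]; exact Submodule.subset_span (Or.inr ⟨k, rfl⟩)
  have hRfun : R = fun u : ℝ => NormedSpace.exp (u • A) := funext hR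
  have hRcont : Continuous R := by rw [hRfun]; exact auxExpCont A
  have hgcont : ∀ ξ x : (Fin n ⊕ Fin n) → ℝ, Continuous (fun s => ξ ⬝ᵥ (R s).mulVec x) := by
    rw [hRfun]; exact fun ξ x => auxCont A ξ x
  have hgderiv : ∀ (ξ x : (Fin n ⊕ Fin n) → ℝ) (s : ℝ),
      HasDerivAt (fun u => ξ ⬝ᵥ (R u).mulVec x) (ξ ⬝ᵥ (R s).mulVec (A.mulVec x)) s := by
    rw [hRfun]; exact fun ξ x s => auxDeriv A ξ x s
  have hgtsum : ∀ (ξ x : (Fin n ⊕ Fin n) → ℝ),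
      (∀ m : ℕ, ξ ⬝ᵥ ((A ^ m).mulVec x) = 0) → ∀ s, ξ ⬝ᵥ (R s).mulVec x = 0 := by
    rw [hRfun]; exact fun ξ x h s => auxExpZero A ξ x h s
  have hR0 : R 0 = 1 := by rw [hR 0]; exact auxExpZeroSmul A
  have hNmem : ∀ y, N.mulVec y ∈ V₀ := by
    intro y
    rw [hN, auxSumMulVec]
    refine Submodule.sum_mem _ fun k _ => ?_
    rw [Matrix.sub_mulVec, auxVecMulVec, auxVecMulVec]
    exact Submodule.sub_mem _ (Submodule.smul_mem _ _ (hvV₀ k))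
      (Submodule.smul_mem _ _ (hwV₀ k))
  have hquadf : ∀ (ξ : (Fin n ⊕ Fin n) → ℝ) (s : ℝ),
      ξ ⬝ᵥ ((R s * M * (R s)ᵀ).mulVec ξ)
        = ∑ k, ((ξ ⬝ᵥ (R s).mulVec (vk k))^2 + (ξ ⬝ᵥ (R s).mulVec (wk k))^2) := by
    intro ξ s
    have expand : R s * M * (R s)ᵀ
        = ∑ k, (R s * vecMulVec (vk k) (vk k) * (R s)ᵀ
              + R s * vecMulVec (wk k) (wk k) * (R s)ᵀ) := by
      rw [hM]
      simp [Matrix.mul_sum, Matrix.sum_mul, Matrix.mul_add, Matrix.add_mul]; rfl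
    rw [expand, auxSumMulVec, auxDotSum]
    refine Finset.sum_congr rfl fun k _ => ?_
    rw [Matrix.add_mulVec, dotProduct_add, auxQuad, auxQuad, sq, sq]
  have hfcont : ∀ ξ : (Fin n ⊕ Fin n) → ℝ,
      Continuous (fun s => ξ ⬝ᵥ ((R s * M * (R s)ᵀ).mulVec ξ)) := by
    intro ξ
    have : (fun s => ξ ⬝ᵥ ((R s * M * (R s)ᵀ).mulVec ξ))
        = fun s => ∑ k, ((ξ ⬝ᵥ (R s).mulVec (vk k))^2 + (ξ ⬝ᵥ (R s).mulVec (wk k))^2) :=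
      funext fun s => hquadf ξ s
    rw [this]
    exact continuous_finset_sum _ fun k _ =>
      (((hgcont ξ (vk k)).pow 2).add ((hgcont ξ (wk k)).pow 2))
  have hfnn : ∀ (ξ : (Fin n ⊕ Fin n) → ℝ) (s : ℝ),
      0 ≤ ξ ⬝ᵥ ((R s * M * (R s)ᵀ).mulVec ξ) := by
    intro ξ s
    rw [hquadf]
    positivity
  have hDint : ∀ (t : ℝ) (ξ : (Fin n ⊕ Fin n) → ℝ),
      ξ ⬝ᵥ (D t).mulVec ξ = ∫ s in (0:ℝ)..t, ξ ⬝ᵥ ((R s * M * (R s)ᵀ).mulVec ξ) := by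
    intro t ξ
    have hG : Continuous fun s => R s * M * (R s)ᵀ :=
      (hRcont.matrix_mul continuous_const).matrix_mul hRcont.matrix_transpose
    have hcij : ∀ i j, Continuous fun s => (R s * M * (R s)ᵀ) i j := fun i j =>
      (continuous_apply j).comp ((continuous_apply i).comp hG)
    have hint1 : ∀ i j, Continuous fun s => ξ i * ((R s * M * (R s)ᵀ) i j * ξ j) := fun i j =>
      continuous_const.mul ((hcij i j).mul continuous_const)
    calc ξ ⬝ᵥ (D t).mulVec ξ = ∑ i, ∑ j, ξ i * (D t i j * ξ j) := by
          simp only [dotProduct, Matrix.mulVec, Finset.mul_sum]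
      _ = ∑ i, ∑ j, ∫ s in (0:ℝ)..t, ξ i * ((R s * M * (R s)ᵀ) i j * ξ j) := by
          refine Finset.sum_congr rfl fun i _ => Finset.sum_congr rfl fun j _ => ?_
          rw [hD]
          simp only [Matrix.of_apply]
          rw [← intervalIntegral.integral_mul_const, ← intervalIntegral.integral_const_mul]
      _ = ∑ i, ∫ s in (0:ℝ)..t, ∑ j, ξ i * ((R s * M * (R s)ᵀ) i j * ξ j) := by
          refine Finset.sum_congr rfl fun i _ => ?_
          exact (intervalIntegral.integral_finset_sum
            (fun j _ => (hint1 i j).intervalIntegrable _ _)).symm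
      _ = ∫ s in (0:ℝ)..t, ∑ i, ∑ j, ξ i * ((R s * M * (R s)ᵀ) i j * ξ j) := by
          refine (intervalIntegral.integral_finset_sum (fun i _ => ?_)).symm
          exact (continuous_finset_sum _ fun j _ => hint1 i j).intervalIntegrable _ _
      _ = ∫ s in (0:ℝ)..t, ξ ⬝ᵥ ((R s * M * (R s)ᵀ).mulVec ξ) := by
          congr 1
          funext s
          simp only [dotProduct, Matrix.mulVec, Finset.mul_sum]
  -- V machinery
  have hV0eq : V 0 = V₀ := by
    rw [hV 0]
    simp [Finset.range_one, Matrix.mulVecLin_one]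
  have hVsucc : ∀ j, V (j+1) = (V₀.map (F^(j+1)).mulVecLin) ⊔ V j := by
    intro j
    rw [hV (j+1), hV j, Finset.range_add_one, Finset.iSup_insert]
  have hVmono : ∀ i j : ℕ, i ≤ j → V i ≤ V j := by
    intro i j hij
    rw [hV i, hV j]
    exact biSup_mono fun m hm => Finset.mem_range.2 (lt_of_lt_of_le (Finset.mem_range.1 hm)
      (by omega))
  have hmapF : ∀ j, (V j).map F.mulVecLin ≤ V (j+1) := by
    intro j
    rw [hV j]
    simp only [Submodule.map_iSup]
    refine iSup₂_le fun m hm => ?_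
    rw [← Submodule.map_comp, ← Matrix.mulVecLin_mul, ← pow_succ']
    rw [hV (j+1)]
    exact le_iSup₂_of_le (m+1)
      (Finset.mem_range.2 (by have := Finset.mem_range.1 hm; omega)) le_rfl
  constructor
  · -- positive definiteness → Hörmander
    intro hpos
    by_contra hne
    have hstep : ∀ j : ℕ, V (j+1) = V j → V (j+2) = V (j+1) := by
      intro j hj
      refine le_antisymm ?_ (hVmono _ _ (by omega))
      rw [hVsucc (j+1)]
      refine sup_le ?_ (hVmono _ _ (by omega))
      have h1 : V₀.map ((F ^ (j+1+1)).mulVecLin) ≤ (V (j+1)).map F.mulVecLin := by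
        rw [pow_succ', Matrix.mulVecLin_mul, Submodule.map_comp]
        apply Submodule.map_mono
        rw [hVsucc j]
        exact le_sup_left
      calc V₀.map ((F ^ (j+1+1)).mulVecLin) ≤ (V (j+1)).map F.mulVecLin := h1
        _ = (V j).map F.mulVecLin := by rw [hj]
        _ ≤ V (j+1) := hmapF j
    have hprop : ∀ j : ℕ, V (j+1) = V j → ∀ i : ℕ, V (j+i) = V j := by
      intro j hj
      have haux : ∀ i : ℕ, V (j+i+1) = V (j+i) := by
        intro i
        induction i with
        | zero => exact hj
        | succ i ih =>
          rw [show j+(i+1)+1 = (j+i)+2 by omega, show j+(i+1) = (j+i)+1 by omega]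
          exact hstep (j+i) ih
      intro i
      induction i with
      | zero => rfl
      | succ i ih => rw [show j+(i+1) = j+i+1 by omega, haux i, ih]
    have hexists : ∃ j : ℕ, j < 2*n ∧ V (j+1) = V j := by
      by_contra hforall
      push_neg at hforall
      have hstrict : ∀ j : ℕ, j < 2*n → V j < V (j+1) := fun j hj =>
        lt_of_le_of_ne (hVmono j (j+1) (by omega)) (Ne.symm (hforall j hj))
      have hrank : ∀ j : ℕ, j ≤ 2*n →
          Module.finrank ℝ (V 0) + j ≤ Module.finrank ℝ (V j) := by
        intro j
        induction j with
        | zero => intro _; simp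
        | succ j ih =>
          intro hj
          have h1 := ih (by omega)
          have h2 : Module.finrank ℝ (V j) < Module.finrank ℝ (V (j+1)) :=
            Submodule.finrank_lt_finrank_of_lt (hstrict j (by omega))
          omega
      have htot : Module.finrank ℝ (V (2*n)) ≤ 2*n := by
        have h1 : Module.finrank ℝ (V (2*n)) ≤ Module.finrank ℝ ((Fin n ⊕ Fin n) → ℝ) :=
          Submodule.finrank_le _
        have h2 : Module.finrank ℝ ((Fin n ⊕ Fin n) → ℝ) = 2*n := by
          rw [Module.finrank_fintype_fun_eq_card, Fintype.card_sum, Fintype.card_fin]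
          omega
        omega
      have h0 : Module.finrank ℝ (V 0) = 0 := by
        have := hrank (2*n) le_rfl
        omega
      have hbot : V 0 = ⊥ := Submodule.finrank_eq_zero.1 h0
      have hV₀bot : V₀ = ⊥ := by rw [← hV0eq]; exact hbot
      have h1bot : V 1 = V 0 := by
        rw [hVsucc 0, hV₀bot, Submodule.map_bot, bot_sup_eq, hbot]
      exact hforall 0 (by omega) h1bot
    obtain ⟨j, hjlt, hjeq⟩ := hexists
    have hstab : V (2*n) = V (2*n - 1) := by
      have e1 := hprop j hjeq (2*n - j)
      have e2 := hprop j hjeq (2*n - 1 - j)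
      rw [show j + (2*n - j) = 2*n by omega] at e1
      rw [show j + (2*n - 1 - j) = 2*n - 1 by omega] at e2
      rw [e1, e2]
    set W := V (2*n - 1) with hW
    have hV₀W : V₀ ≤ W := by rw [hW, ← hV0eq]; exact hVmono 0 _ (by omega)
    have hFW : ∀ x, x ∈ W → F.mulVec x ∈ W := by
      intro x hx
      have h1 := hmapF (2*n - 1)
      rw [show 2*n - 1 + 1 = 2*n by omega, hstab] at h1
      exact h1 ⟨x, hx, rfl⟩
    have hAW : ∀ x, x ∈ W → A.mulVec x ∈ W := by
      intro x hx
      rw [hA, Matrix.add_mulVec]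
      refine Submodule.add_mem _ (hFW x hx) ?_
      rw [← Matrix.mulVec_mulVec]
      exact hV₀W (hNmem _)
    have hAmW : ∀ (m : ℕ) (x : (Fin n ⊕ Fin n) → ℝ), x ∈ W → (A ^ m).mulVec x ∈ W := by
      intro m
      induction m with
      | zero => intro x hx; simpa [Matrix.one_mulVec] using hx
      | succ m ih =>
        intro x hx
        have hsplit : (A ^ (m+1)).mulVec x = A.mulVec ((A ^ m).mulVec x) := by
          rw [pow_succ', ← Matrix.mulVec_mulVec]
        rw [hsplit]
        exact hAW _ (ih x hx)
    have hWlt : W < ⊤ := lt_top_iff_ne_top.2 (by rw [hW]; exact hne)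
    let el := WithLp.linearEquiv 2 ℝ ((Fin n ⊕ Fin n) → ℝ)
    set W' : Submodule ℝ (EuclideanSpace ℝ (Fin n ⊕ Fin n)) := W.comap el.toLinearMap with hW'
    have hW'ne : W' ≠ ⊤ := by
      intro h
      obtain ⟨x, -, hxW⟩ := SetLike.exists_of_lt hWlt
      have hmem : el.symm x ∈ W' := h ▸ Submodule.mem_top
      rw [hW', Submodule.mem_comap, LinearEquiv.coe_coe, LinearEquiv.apply_symm_apply] at hmem
      exact hxW hmem
    have hW'orth : W'ᗮ ≠ ⊥ := fun h => hW'ne (Submodule.orthogonal_eq_bot_iff.1 h)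
    obtain ⟨ξ', hξ'mem, hξ'ne⟩ := Submodule.exists_mem_ne_zero_of_ne_bot hW'orth
    set ξ : (Fin n ⊕ Fin n) → ℝ := el ξ' with hξdef
    have hξne : ξ ≠ 0 := by
      intro h
      exact hξ'ne ((LinearEquiv.map_eq_zero_iff el).1 h)
    have horth : ∀ x, x ∈ W → ξ ⬝ᵥ x = 0 := by
      intro x hx
      have hmem' : el.symm x ∈ W' := by
        rw [hW', Submodule.mem_comap, LinearEquiv.coe_coe, LinearEquiv.apply_symm_apply]
        exact hx
      have hinner := (Submodule.mem_orthogonal W' ξ').1 hξ'mem (el.symm x) hmem'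
      have hdot : ξ ⬝ᵥ x = inner ℝ (el.symm x) ξ' := by
        rw [hξdef]
        simp only [dotProduct, PiLp.inner_apply, RCLike.inner_apply, starRingEnd_apply,
          star_trivial, WithLp.linearEquiv_apply, WithLp.linearEquiv_symm_apply,
          WithLp.coe_linearEquiv, WithLp.coe_symm_linearEquiv, PiLp.toLp_apply]
        exact Finset.sum_congr rfl fun i _ => rfl
      rw [hdot, hinner]
    have hAmzero : ∀ x, x ∈ V₀ → ∀ m : ℕ, ξ ⬝ᵥ (A ^ m).mulVec x = 0 := fun x hx m =>
      horth _ (hAmW m x (hV₀W hx))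
    have hgzero : ∀ x, x ∈ V₀ → ∀ s : ℝ, ξ ⬝ᵥ (R s).mulVec x = 0 := fun x hx =>
      hgtsum ξ x (hAmzero x hx)
    have hfzero : ∀ s : ℝ, ξ ⬝ᵥ ((R s * M * (R s)ᵀ).mulVec ξ) = 0 := by
      intro s
      rw [hquadf]
      apply Finset.sum_eq_zero
      intro k _
      rw [hgzero _ (hvV₀ k) s, hgzero _ (hwV₀ k) s]
      simp
    have hD1 : ξ ⬝ᵥ (D 1).mulVec ξ = 0 := by
      rw [hDint]
      simp only [hfzero]
      simp
    have hcontra := hpos 1 one_pos ξ hξne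
    rw [hD1] at hcontra
    exact lt_irrefl 0 hcontra
  · -- Hörmander → positive definiteness
    intro hTop t ht ξ hξ
    by_contra hlt
    have hle : ξ ⬝ᵥ (D t).mulVec ξ ≤ 0 := not_lt.1 hlt
    have hint : (∫ s in (0:ℝ)..t, ξ ⬝ᵥ ((R s * M * (R s)ᵀ).mulVec ξ)) ≤ 0 := by
      rw [← hDint t ξ]; exact hle
    have hf0 : ∀ s ∈ Set.Icc (0:ℝ) t, ξ ⬝ᵥ ((R s * M * (R s)ᵀ).mulVec ξ) = 0 :=
      auxIntZero (hfcont ξ) ht (hfnn ξ) hint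
    have hsq : ∀ s ∈ Set.Icc (0:ℝ) t, ∀ k,
        (ξ ⬝ᵥ (R s).mulVec (vk k))^2 + (ξ ⬝ᵥ (R s).mulVec (wk k))^2 = 0 := by
      intro s hs k
      have h1 := hf0 s hs
      rw [hquadf] at h1
      exact (Finset.sum_eq_zero_iff_of_nonneg (fun k _ => by positivity)).1 h1 k
        (Finset.mem_univ k)
    have hgen0v : ∀ k, ∀ s ∈ Set.Icc (0:ℝ) t, ξ ⬝ᵥ (R s).mulVec (vk k) = 0 := by
      intro k s hs
      have := hsq s hs k
      nlinarith [sq_nonneg (ξ ⬝ᵥ (R s).mulVec (vk k)), sq_nonneg (ξ ⬝ᵥ (R s).mulVec (wk k))]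
    have hgen0w : ∀ k, ∀ s ∈ Set.Icc (0:ℝ) t, ξ ⬝ᵥ (R s).mulVec (wk k) = 0 := by
      intro k s hs
      have := hsq s hs k
      nlinarith [sq_nonneg (ξ ⬝ᵥ (R s).mulVec (vk k)), sq_nonneg (ξ ⬝ᵥ (R s).mulVec (wk k))]
    set S : Submodule ℝ ((Fin n ⊕ Fin n) → ℝ) :=
      ⨅ s ∈ Set.Icc (0:ℝ) t, LinearMap.ker (dotMulVecArg ξ (R s)) with hS
    have hmemS : ∀ x, x ∈ S ↔ ∀ s ∈ Set.Icc (0:ℝ) t, ξ ⬝ᵥ (R s).mulVec x = 0 := by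
      intro x
      simp [hS, Submodule.mem_iInf, LinearMap.mem_ker, dotMulVecArg, LinearMap.coe_mk,
        AddHom.coe_mk]
    have hV₀S : V₀ ≤ S := by
      rw [hV₀, Submodule.span_le]
      rintro x (⟨k, rfl⟩ | ⟨k, rfl⟩) <;> rw [SetLike.mem_coe, hmemS]
      · exact hgen0v k
      · exact hgen0w k
    have hAS : ∀ x, x ∈ S → A.mulVec x ∈ S := by
      intro x hx
      rw [hmemS] at hx ⊢
      have hIoo : ∀ s ∈ Set.Ioo (0:ℝ) t, ξ ⬝ᵥ (R s).mulVec (A.mulVec x) = 0 := by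
        intro s hs
        have hder := hgderiv ξ x s
        have hev : (fun u => ξ ⬝ᵥ (R u).mulVec x) =ᶠ[nhds s] fun _ => (0:ℝ) := by
          filter_upwards [Icc_mem_nhds hs.1 hs.2] with u hu
          exact hx u hu
        have h0 : HasDerivAt (fun u => ξ ⬝ᵥ (R u).mulVec x) 0 s :=
          (hasDerivAt_const s (0:ℝ)).congr_of_eventuallyEq hev
        exact hder.unique h0
      have hclosed : IsClosed {s : ℝ | ξ ⬝ᵥ (R s).mulVec (A.mulVec x) = 0} :=
        isClosed_eq (hgcont ξ (A.mulVec x)) continuous_const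
      intro s hs
      have hsub : Set.Icc (0:ℝ) t ⊆ {s : ℝ | ξ ⬝ᵥ (R s).mulVec (A.mulVec x) = 0} := by
        rw [← closure_Ioo ht.ne]
        exact closure_minimal hIoo hclosed
      exact hsub hs
    have hAmS : ∀ (m : ℕ) (x : (Fin n ⊕ Fin n) → ℝ), x ∈ S → (A ^ m).mulVec x ∈ S := by
      intro m
      induction m with
      | zero => intro x hx; simpa [Matrix.one_mulVec] using hx
      | succ m ih =>
        intro x hx
        have hsplit : (A ^ (m+1)).mulVec x = A.mulVec ((A ^ m).mulVec x) := by
          rw [pow_succ', ← Matrix.mulVec_mulVec]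
        rw [hsplit]
        exact hAS _ (ih x hx)
    set U : Submodule ℝ ((Fin n ⊕ Fin n) → ℝ) :=
      ⨆ m : ℕ, V₀.map ((A ^ m).mulVecLin) with hU
    have hV₀U : V₀ ≤ U := by
      have h0 : V₀.map ((A ^ 0).mulVecLin) = V₀ := by
        simp [pow_zero, Matrix.mulVecLin_one, Submodule.map_id]
      exact h0 ▸ le_iSup (fun m => V₀.map ((A ^ m).mulVecLin)) 0
    have hUS : U ≤ S := by
      refine iSup_le fun m => Submodule.map_le_iff_le_comap.2 fun x hx => ?_
      rw [Submodule.mem_comap, Matrix.mulVecLin_apply]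
      exact hAmS m x (hV₀S hx)
    have hAU : U.map A.mulVecLin ≤ U := by
      rw [hU, Submodule.map_iSup]
      refine iSup_le fun m => ?_
      rw [← Submodule.map_comp, ← Matrix.mulVecLin_mul, ← pow_succ']
      exact le_iSup (fun m => V₀.map ((A ^ m).mulVecLin)) (m+1)
    have hFU : ∀ x, x ∈ U → F.mulVec x ∈ U := by
      intro x hx
      have hFA : F = A - N * Ω := by rw [hA, add_sub_cancel_right]
      have hFx : F.mulVec x = A.mulVec x - N.mulVec (Ω.mulVec x) := by
        rw [hFA, Matrix.sub_mulVec, ← Matrix.mulVec_mulVec]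
      rw [hFx]
      refine Submodule.sub_mem _ ?_ (hV₀U (hNmem _))
      exact hAU ⟨x, hx, rfl⟩
    have hFmU : ∀ m : ℕ, V₀.map ((F ^ m).mulVecLin) ≤ U := by
      intro m
      induction m with
      | zero => simpa [Matrix.mulVecLin_one, Submodule.map_id] using hV₀U
      | succ m ih =>
        rw [pow_succ', Matrix.mulVecLin_mul, Submodule.map_comp]
        refine Submodule.map_le_iff_le_comap.2 fun x hx => ?_
        rw [Submodule.mem_comap, Matrix.mulVecLin_apply]
        exact hFU x (ih hx)
    have hTopS : (⊤ : Submodule ℝ ((Fin n ⊕ Fin n) → ℝ)) ≤ S := by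
      rw [← hTop, hV]
      exact le_trans (iSup₂_le fun m _ => hFmU m) hUS
    have hξS : ξ ∈ S := hTopS Submodule.mem_top
    rw [hmemS] at hξS
    have h00 := hξS 0 (Set.left_mem_Icc.2 ht.le)
    rw [hR0, Matrix.one_mulVec] at h00
    exact hξ (dotProduct_self_eq_zero.1 h00)
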